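/- For every natural number m ≥ 1 and all real numbers τ, β with 0 < τ ≤ β, the interval integral ∫_τ^β [ (1 - (1-t)^{m-1})·(τ/t) + (1-t)^{m-1} ] dt equals τ·Σ_{i=1}^{m-1} C(m-1,i)·(-1)^{i+1}·(β^i - τ^i)/i + ((1-τ)^m - (1-β)^m)/m. -/

import Mathlib

open Finset

lemma binom_expand (n : ℕ) (t : ℝ) :
    1 - (1 - t) ^ n = ∑ i ∈ Finset.Icc 1 n, (n.choose i : ℝ) * (-1) ^ (i + 1) * t ^ i := by
  have h : (1 - t) ^ n
      = ∑ i ∈ Finset.range (n + 1), (-t) ^ i * 1 ^ (n - i) * (n.choose i : ℝ) := by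
    rw [← add_pow]; ring_nf
  have hr : Finset.range (n + 1) = insert 0 (Finset.Icc 1 n) := by
    ext x; simp; omega
  have key : ∀ i ∈ Finset.Icc 1 n,
      -((-t) ^ i * 1 ^ (n - i) * (n.choose i : ℝ))
        = (n.choose i : ℝ) * (-1) ^ (i + 1) * t ^ i := by
    intro i _
    rw [neg_pow]
    ring
  rw [h, hr, Finset.sum_insert (by simp), ← Finset.sum_congr rfl key]
  simp

theorem stmt_6 (m : ℕ) (hm : 1 ≤ m) (τ β : ℝ) (hτ : 0 < τ) (hτβ : τ ≤ β) :
    ∫ t in τ..β, ((1 - (1 - t) ^ (m - 1)) * (τ / t) + (1 - t) ^ (m - 1)) =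
      τ * (∑ i ∈ Finset.Icc 1 (m - 1),
          ((m - 1).choose i : ℝ) * (-1) ^ (i + 1) * (β ^ i - τ ^ i) / i)
        + ((1 - τ) ^ m - (1 - β) ^ m) / m := by
  set n := m - 1 with hn
  have hmn : m = n + 1 := by omega
  have hm0 : (m : ℝ) ≠ 0 := Nat.cast_ne_zero.mpr (by omega)
  set c : ℕ → ℝ := fun i => (n.choose i : ℝ) * (-1) ^ (i + 1) with hc
  set F : ℝ → ℝ := fun t =>
    τ * ∑ i ∈ Finset.Icc 1 n, c i * t ^ i / i - (1 - t) ^ m / m with hF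
  have huIcc : Set.uIcc τ β = Set.Icc τ β := Set.uIcc_of_le hτβ
  have hderiv : ∀ t ∈ Set.uIcc τ β,
      HasDerivAt F ((1 - (1 - t) ^ n) * (τ / t) + (1 - t) ^ n) t := by
    intro t ht
    rw [huIcc] at ht
    have ht0 : 0 < t := lt_of_lt_of_le hτ ht.1
    have h1 : HasDerivAt (fun t : ℝ => τ * ∑ i ∈ Finset.Icc 1 n, c i * t ^ i / i)
        (τ * ∑ i ∈ Finset.Icc 1 n, c i * t ^ (i - 1)) t := by
      apply HasDerivAt.const_mul
      apply HasDerivAt.fun_sum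
      intro i hi
      have hi1 : 1 ≤ i := (Finset.mem_Icc.mp hi).1
      have hi0 : (i : ℝ) ≠ 0 := Nat.cast_ne_zero.mpr (by omega)
      have h := ((hasDerivAt_pow i t).const_mul (c i)).div_const i
      refine h.congr_deriv (Eq.symm ?_)
      field_simp
    have h2 : HasDerivAt (fun t : ℝ => (1 - t) ^ m / m) (-(1 - t) ^ n) t := by
      have h := (((hasDerivAt_id t).const_sub 1).fun_pow m).div_const m
      refine h.congr_deriv (Eq.symm ?_)
      rw [hmn]
      field_simp
      ring
      simp
    have h := h1.fun_sub h2
    refine h.congr_deriv (Eq.symm ?_)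
    rw [binom_expand, sub_neg_eq_add]
    congr 1
    rw [Finset.sum_mul, Finset.mul_sum]
    apply Finset.sum_congr rfl
    intro i hi
    have hi1 : 1 ≤ i := (Finset.mem_Icc.mp hi).1
    obtain ⟨j, rfl⟩ : ∃ j, i = j + 1 := ⟨i - 1, by omega⟩
    simp only [Nat.add_sub_cancel, pow_succ]
    field_simp
    ring
  have hint : IntervalIntegrable
      (fun t => (1 - (1 - t) ^ n) * (τ / t) + (1 - t) ^ n) MeasureTheory.volume τ β := by
    apply ContinuousOn.intervalIntegrable
    rw [huIcc]
    apply ContinuousOn.add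
    · exact (continuousOn_const.sub ((continuousOn_const.sub continuousOn_id).pow _)).mul
        (continuousOn_const.div continuousOn_id
          (fun t ht => ne_of_gt (lt_of_lt_of_le hτ ht.1)))
    · exact (continuousOn_const.sub continuousOn_id).pow _
  rw [intervalIntegral.integral_eq_sub_of_hasDerivAt hderiv hint]
  have hsum : ∑ i ∈ Finset.Icc 1 n, (n.choose i : ℝ) * (-1) ^ (i + 1) * (β ^ i - τ ^ i) / i
      = (∑ i ∈ Finset.Icc 1 n, c i * β ^ i / i) - ∑ i ∈ Finset.Icc 1 n, c i * τ ^ i / i := by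
    rw [← Finset.sum_sub_distrib]
    apply Finset.sum_congr rfl
    intro i _
    simp only [hc]
    ring
  simp only [hF]
  rw [hsum]
  ring
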